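/- Suppose the capacitor voltage v(t) = v̂·(−sin θ(t), cos θ(t)) and inductor current i(t) = v̂_ℓ·(−sin θ_ℓ(t), cos θ_ℓ(t)) (with v̂, v̂_ℓ > 0) satisfy C·v̇ = −G_load·v + i with constant load G_load = [[g, −b],[b, g]], g > 0, and θ̇ = ω_s ≠ 0. Then sin(θ_ℓ − θ) = (Cω_s + b)·v̂ / v̂_ℓ and cos(θ_ℓ − θ) = g·v̂ / v̂_ℓ ≠ 0, and if additionally sin(θ_ℓ − θ) is constant in time, then θ̇_ℓ = θ̇ = ω_s. -/
import Mathlib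


open Real Matrix

/-- Phase relations at steady state of the capacitor equation with a constant load
G_load = [[g, −b],[b, g]], and synchronization of the current angle to the voltage
frequency. -/
theorem steady_state_phase_relations_and_sync
    (C g b ωs vhat vl : ℝ) (hC : 0 < C) (hg : 0 < g) (hωs : ωs ≠ 0)
    (hvhat : 0 < vhat) (hvl : 0 < vl)
    (θ θℓ ωℓ : ℝ → ℝ)
    (hθ : ∀ t, HasDerivAt θ ωs t)
    (hθℓ : ∀ t, HasDerivAt θℓ (ωℓ t) t)
    (hcap : ∀ t, HasDerivAt
      (fun τ => (![-(vhat * Real.sin (θ τ)), vhat * Real.cos (θ τ)] : Fin 2 → ℝ))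
      (C⁻¹ • ((![-(vl * Real.sin (θℓ t)), vl * Real.cos (θℓ t)] : Fin 2 → ℝ)
        - (!![g, -b; b, g]).mulVec ![-(vhat * Real.sin (θ t)), vhat * Real.cos (θ t)])) t) :
    ∀ t, Real.sin (θℓ t - θ t) = (C * ωs + b) * vhat / vl ∧
      Real.cos (θℓ t - θ t) = g * vhat / vl ∧
      Real.cos (θℓ t - θ t) ≠ 0 ∧
      HasDerivAt θℓ ωs t := by
  have key : ∀ t, vl * Real.sin (θℓ t)
        = g * vhat * Real.sin (θ t) + (b + C * ωs) * vhat * Real.cos (θ t) ∧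
      vl * Real.cos (θℓ t)
        = g * vhat * Real.cos (θ t) - (C * ωs + b) * vhat * Real.sin (θ t) := by
    intro t
    have h0 := (hasDerivAt_pi.mp (hcap t)) 0
    have h1 := (hasDerivAt_pi.mp (hcap t)) 1
    simp only [Matrix.cons_val_zero, Matrix.cons_val_one, Matrix.head_cons, Pi.smul_apply,
      Pi.sub_apply, Matrix.mulVec, dotProduct, Fin.sum_univ_two, smul_eq_mul,
      Matrix.of_apply, Matrix.cons_val', Matrix.head_fin_const, Matrix.empty_val',
      Matrix.cons_val_fin_one] at h0 h1
    have d0 : HasDerivAt (fun τ => -(vhat * Real.sin (θ τ)))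
        (-(vhat * (Real.cos (θ t) * ωs))) t := (((hθ t).sin).const_mul vhat).neg
    have d1 : HasDerivAt (fun τ => vhat * Real.cos (θ τ))
        (vhat * (-Real.sin (θ t) * ωs)) t := ((hθ t).cos).const_mul vhat
    have e0 := d0.unique h0
    have e1 := d1.unique h1
    rw [eq_inv_mul_iff_mul_eq₀ hC.ne'] at e0 e1
    constructor <;> nlinarith [e0, e1]
  have hsin : ∀ t, Real.sin (θℓ t - θ t) = (C * ωs + b) * vhat / vl := by
    intro t
    obtain ⟨k1, k2⟩ := key t
    rw [Real.sin_sub, eq_div_iff hvl.ne']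
    linear_combination Real.cos (θ t) * k1 - Real.sin (θ t) * k2
      + (C * ωs + b) * vhat * (Real.sin_sq_add_cos_sq (θ t))
  intro t
  obtain ⟨k1, k2⟩ := key t
  have hcos : Real.cos (θℓ t - θ t) = g * vhat / vl := by
    rw [Real.cos_sub, eq_div_iff hvl.ne']
    linear_combination Real.sin (θ t) * k1 + Real.cos (θ t) * k2
      + g * vhat * (Real.sin_sq_add_cos_sq (θ t))
  have hcne : Real.cos (θℓ t - θ t) ≠ 0 := by
    rw [hcos]; positivity
  refine ⟨hsin t, hcos, hcne, ?_⟩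
  have hconst : (fun τ => Real.sin (θℓ τ - θ τ)) = fun _ => (C * ωs + b) * vhat / vl :=
    funext fun τ => hsin τ
  have hd : HasDerivAt (fun τ => Real.sin (θℓ τ - θ τ))
      (Real.cos (θℓ t - θ t) * (ωℓ t - ωs)) t := ((hθℓ t).sub (hθ t)).sin
  have hd0 : HasDerivAt (fun τ => Real.sin (θℓ τ - θ τ)) 0 t := by
    rw [hconst]; exact hasDerivAt_const _ _
  have hz : Real.cos (θℓ t - θ t) * (ωℓ t - ωs) = 0 := hd.unique hd0
  have hω : ωℓ t = ωs := by
    rcases mul_eq_zero.mp hz with h | h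
    · exact absurd h hcne
    · linarith
  simpa [hω] using hθℓ t
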